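/- arXiv:2306.10437 — 4 statements merged into one kernel-verified Lean document; each statement's English description precedes it below -/
import Mathlib

section
/- Let M ≥ 0 be an integer and s ≥ 0, N ≥ 1 real numbers. Then the number of ordered pairs (i,j) with 0 ≤ i, j < 2^M, i ≠ j, and ‖i/2^M - j/2^M‖ ≤ s/N equals ⌊(s/N)·2^M⌋ · 2^M · 2, provided ⌊(s/N)·2^M⌋ < 2^{M-1} (i.e., the threshold s/N is less than 1/2 up to rounding at resolution 2^{-M}). -/
open scoped Classical

/-- Radical-inverse function in base 2. -/
noncomputable def g2 (n : ℕ) : ℝ :=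
  ∑ j ∈ Finset.range (n + 1), (if n.testBit j then ((2 : ℝ) ^ (j + 1))⁻¹ else 0)

/-- Van der Corput sequence in base 2, indexed from 1, with x₁ = 0. -/
noncomputable def vdc (i : ℕ) : ℝ := g2 (i - 1)

/-- Distance to the nearest integer. -/
noncomputable def nint (x : ℝ) : ℝ := |x - round x|

/-- Finite empiric pair correlation function of the van der Corput sequence in base 2. -/
noncomputable def F (N : ℕ) (s : ℝ) : ℝ :=
  (((Finset.Icc 1 N ×ˢ Finset.Icc 1 N).filter
      (fun p => p.1 ≠ p.2 ∧ nint (vdc p.1 - vdc p.2) ≤ s / N)).card : ℝ) / N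

lemma nint_add_int (x : ℝ) (m : ℤ) : nint (x + m) = nint x := by
  unfold nint
  rw [round_add_intCast]
  push_cast
  ring_nf

lemma nint_frac (d n : ℕ) (hn : 0 < n) (hd : d < n) :
    nint ((d : ℝ) / n) = (min d (n - d) : ℝ) / n := by
  have hn' : (0:ℝ) < n := by exact_mod_cast hn
  have hd' : (d:ℝ) < n := by exact_mod_cast hd
  unfold nint
  rcases lt_or_ge (2 * d) n with h2 | h2
  · have h2' : 2 * (d:ℝ) < n := by exact_mod_cast h2
    have hr : round ((d:ℝ)/n) = 0 := by
      rw [round_eq, Int.floor_eq_zero_iff]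
      constructor
      · positivity
      · rw [div_add' _ _ _ (ne_of_gt hn'), div_lt_one hn']
        linarith
    rw [hr, min_eq_left (by linarith : (d:ℝ) ≤ (n:ℝ) - d)]
    simp [abs_of_nonneg (by positivity : (0:ℝ) ≤ (d:ℝ)/n)]
  · have h2' : (n:ℝ) ≤ 2 * d := by exact_mod_cast h2
    have hr : round ((d:ℝ)/n) = 1 := by
      rw [round_eq, Int.floor_eq_iff]
      constructor
      · push_cast
        rw [div_add' _ _ _ (ne_of_gt hn'), le_div_iff₀ hn']
        linarith
      · push_cast
        rw [div_add' _ _ _ (ne_of_gt hn'), div_lt_iff₀ hn']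
        linarith
    rw [hr, min_eq_right (by linarith : (n:ℝ) - d ≤ (d:ℝ))]
    rw [abs_of_nonpos (by rw [sub_nonpos]; push_cast; rw [div_le_one hn']; linarith)]
    push_cast
    field_simp
    ring

lemma nint_pair (n i j : ℕ) (hn : 0 < n) (hi : i < n) (hj : j < n) :
    nint ((i:ℝ)/n - (j:ℝ)/n)
      = ((min ((i + n - j) % n) (n - (i + n - j) % n) : ℕ) : ℝ) / n := by
  have hn' : (0:ℝ) < n := by exact_mod_cast hn
  set a := i + n - j with ha
  set q := a / n with hq
  set r := a % n with hr
  have hrn : r < n := Nat.mod_lt _ hn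
  have hsplit : a = n * q + r := (Nat.div_add_mod a n).symm
  have hcast : (a : ℝ) = (i:ℝ) + n - j := by
    have hj' : j ≤ i + n := by omega
    push_cast [ha, Nat.cast_sub hj']
    ring
  have h1 : (a : ℝ) = n * (q : ℝ) + (r : ℝ) := by exact_mod_cast hsplit
  have key : (i:ℝ)/n - (j:ℝ)/n = ((r : ℕ) : ℝ)/n + ((((q : ℕ) : ℤ) - 1 : ℤ) : ℝ) := by
    have h3 : (i:ℝ)/n - (j:ℝ)/n = (a:ℝ)/n - 1 := by
      rw [hcast]; field_simp; ring
    rw [h3, h1]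
    push_cast
    field_simp
    ring
  rw [key, nint_add_int, nint_frac r n hn hrn]
  congr 1
  rw [Nat.cast_min, Nat.cast_sub hrn.le]

lemma mod_inv_aux (n i j : ℕ) (hn : 0 < n) (hi : i < n) (hj : j < n) :
    (i + n - (i + n - j) % n) % n = j := by
  have h1 : (i + n - j) % n = if i < j then i + n - j else i - j := by
    rcases Nat.lt_or_ge i j with hij | hij
    · rw [if_pos hij]; exact Nat.mod_eq_of_lt (by omega)
    · rw [if_neg (not_lt.2 hij)]
      have h2 : i + n - j = (i - j) + n := by omega
      rw [h2, Nat.add_mod_right]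
      exact Nat.mod_eq_of_lt (by omega)
  rw [h1]
  split_ifs with hij
  · have h2 : i + n - (i + n - j) = j := by omega
    rw [h2]
    exact Nat.mod_eq_of_lt hj
  · have h2 : i + n - (i - j) = j + n := by omega
    rw [h2, Nat.add_mod_right]
    exact Nat.mod_eq_of_lt hj

theorem stmt4 (M : ℕ) (s N : ℝ) (hs : 0 ≤ s) (hN : 1 ≤ N)
    (h : 2 * ⌊s / N * 2 ^ M⌋ < 2 ^ M) :
    ((((Finset.range (2 ^ M)) ×ˢ (Finset.range (2 ^ M))).filter
        (fun p => p.1 ≠ p.2 ∧ nint ((p.1 : ℝ) / 2 ^ M - (p.2 : ℝ) / 2 ^ M) ≤ s / N)).card : ℤ)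
      = ⌊s / N * 2 ^ M⌋ * 2 ^ M * 2 := by
  set n : ℕ := 2 ^ M with hn
  have hn0 : 0 < n := by positivity
  have hn' : (0:ℝ) < (n:ℝ) := by exact_mod_cast hn0
  have hnc : ((n:ℕ) : ℝ) = (2:ℝ) ^ M := by push_cast [hn]; ring
  have hN0 : (0:ℝ) < N := by linarith
  set K : ℤ := ⌊s / N * 2 ^ M⌋ with hK
  have hK0 : 0 ≤ K := Int.floor_nonneg.2 (by positivity)
  set K' : ℕ := K.toNat with hK'
  have hKK : (K' : ℤ) = K := Int.toNat_of_nonneg hK0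
  have h2K : 2 * K' < n := by
    have : ((2:ℤ)^M) = ((n : ℕ) : ℤ) := by push_cast [hn]; ring
    omega
  -- the key equivalence
  have hcond : ∀ i j : ℕ, i < n → j < n →
      ((i ≠ j ∧ nint ((i : ℝ) / 2 ^ M - (j : ℝ) / 2 ^ M) ≤ s / N) ↔
        ((i + n - j) % n ≠ 0 ∧ min ((i + n - j) % n) (n - (i + n - j) % n) ≤ K')) := by
    intro i j hi hj
    have hrw : nint ((i : ℝ) / 2 ^ M - (j : ℝ) / 2 ^ M)
        = ((min ((i + n - j) % n) (n - (i + n - j) % n) : ℕ) : ℝ) / n := by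
      rw [← hnc]; exact nint_pair n i j hn0 hi hj
    rw [hrw]
    have hne : i ≠ j ↔ (i + n - j) % n ≠ 0 := by
      constructor
      · intro hij h0
        rcases Nat.lt_or_ge (i + n - j) n with hlt | hge
        · have := Nat.mod_eq_of_lt hlt; omega
        · have h1 : i + n - j - n < n := by omega
          have := Nat.mod_eq_sub_mod hge
          rw [this, Nat.mod_eq_of_lt h1] at h0
          omega
      · intro h0 hij
        subst hij
        simp at h0
    set m : ℕ := min ((i + n - j) % n) (n - (i + n - j) % n) with hm
    have hle : ((m : ℕ) : ℝ) / n ≤ s / N ↔ m ≤ K' := by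
      rw [div_le_iff₀ hn', hnc]
      constructor
      · intro hh
        have h1 : ((m : ℤ) : ℝ) ≤ s / N * 2 ^ M := by exact_mod_cast hh
        have h2 : (m : ℤ) ≤ K := by rw [hK]; exact Int.le_floor.2 h1
        omega
      · intro hh
        have h2 : (m : ℤ) ≤ K := by omega
        have h1 : ((m : ℤ) : ℝ) ≤ s / N * 2 ^ M := by
          rw [hK] at h2; exact le_trans (by exact_mod_cast h2) (Int.floor_le _)
        exact_mod_cast h1
    rw [hne, hle]
  -- target set
  set D : Finset ℕ := (Finset.range n).filter
      (fun d => d ≠ 0 ∧ min d (n - d) ≤ K') with hD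
  have hmemD : ∀ d, d ∈ D ↔ (d < n ∧ d ≠ 0 ∧ min d (n - d) ≤ K') := by
    intro d
    simp [hD, Finset.mem_filter, Finset.mem_range]
  have hcard : (((Finset.range n) ×ˢ (Finset.range n)).filter
        (fun p => p.1 ≠ p.2 ∧ nint ((p.1 : ℝ) / 2 ^ M - (p.2 : ℝ) / 2 ^ M) ≤ s / N)).card
      = ((Finset.range n) ×ˢ D).card := by
    apply Finset.card_bij' (fun p _ => ((p.1, (p.1 + n - p.2) % n) : ℕ × ℕ))
      (fun p _ => ((p.1, (p.1 + n - p.2) % n) : ℕ × ℕ))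
    · rintro ⟨i, j⟩ hp
      simp only [Finset.mem_filter, Finset.mem_product, Finset.mem_range] at hp
      obtain ⟨⟨hp1, hp2⟩, hc⟩ := hp
      rw [hcond i j hp1 hp2] at hc
      rw [Finset.mem_product, Finset.mem_range]
      exact ⟨hp1, (hmemD _).2 ⟨Nat.mod_lt _ hn0, hc.1, hc.2⟩⟩
    · rintro ⟨i, d⟩ hp
      rw [Finset.mem_product, Finset.mem_range] at hp
      obtain ⟨hp1, hp2⟩ := hp
      rw [hmemD] at hp2
      obtain ⟨hdn, hd0, hdm⟩ := hp2
      have hj : (i + n - d) % n < n := Nat.mod_lt _ hn0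
      rw [Finset.mem_filter, Finset.mem_product, Finset.mem_range, Finset.mem_range]
      refine ⟨⟨hp1, hj⟩, ?_⟩
      rw [hcond i _ hp1 hj, mod_inv_aux n i d hn0 hp1 hdn]
      exact ⟨hd0, hdm⟩
    · rintro ⟨i, j⟩ hp
      simp only [Finset.mem_filter, Finset.mem_product, Finset.mem_range] at hp
      obtain ⟨⟨hp1, hp2⟩, hc⟩ := hp
      simp only [Prod.mk.injEq]
      exact ⟨by trivial, mod_inv_aux n i j hn0 hp1 hp2⟩
    · rintro ⟨i, d⟩ hp
      rw [Finset.mem_product, Finset.mem_range] at hp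
      obtain ⟨hp1, hp2⟩ := hp
      rw [hmemD] at hp2
      simp only [Prod.mk.injEq]
      exact ⟨by trivial, mod_inv_aux n i d hn0 hp1 hp2.1⟩
  have hDcard : D.card = 2 * K' := by
    have hDeq : D = Finset.Icc 1 K' ∪ Finset.Icc (n - K') (n - 1) := by
      ext d
      rw [hmemD, Finset.mem_union, Finset.mem_Icc, Finset.mem_Icc]
      omega
    rw [hDeq, Finset.card_union_of_disjoint]
    · rw [Nat.card_Icc, Nat.card_Icc]
      omega
    · rw [Finset.disjoint_left]
      intro d hd1 hd2
      rw [Finset.mem_Icc] at hd1 hd2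
      omega
  have hprod : ((Finset.range n) ×ˢ D).card = n * (2 * K') := by
    rw [Finset.card_product, Finset.card_range, hDcard]
  rw [hcard, hprod]
  have h2n : ((2:ℤ)^M) = ((n : ℕ) : ℤ) := by push_cast [hn]; ring
  rw [h2n]
  push_cast [← hKK]
  ring
end

section
/- Let (x_n) be the van der Corput sequence in base 2 and let F_N(s) = (1/N)·#{1 ≤ k ≠ l ≤ N : ‖x_k - x_l‖ ≤ s/N}. Then for every real s with 0 ≤ s ≤ 1/2 and every N ∈ ℕ, F_N(s) = 0. -/
open scoped Classical

lemma sum_ext (n a b : ℕ) (ha : n < 2 ^ a) (hab : a ≤ b) :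
    ∑ j ∈ Finset.range a, (if n.testBit j then ((2 : ℝ) ^ (j + 1))⁻¹ else 0)
      = ∑ j ∈ Finset.range b, (if n.testBit j then ((2 : ℝ) ^ (j + 1))⁻¹ else 0) := by
  refine Finset.sum_subset (Finset.range_subset_range.2 hab) ?_
  intro j _ hj
  have hj' : a ≤ j := le_of_not_gt (by simpa [Finset.mem_range] using hj)
  have : n < 2 ^ j := lt_of_lt_of_le ha (Nat.pow_le_pow_right (by norm_num) hj')
  simp [Nat.testBit_lt_two_pow this]

lemma g2_eq (n M : ℕ) (h : n < 2 ^ M) :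
    g2 n = ∑ j ∈ Finset.range M, (if n.testBit j then ((2 : ℝ) ^ (j + 1))⁻¹ else 0) := by
  have h1 : n < 2 ^ (n + 1) := lt_trans (Nat.lt_two_pow_self (n := n)) (Nat.pow_lt_pow_right (by norm_num) n.lt_succ_self)
  rw [g2, sum_ext n (n+1) (max (n+1) M) h1 (le_max_left _ _),
      sum_ext n M (max (n+1) M) h (le_max_right _ _)]

lemma geo (b : ℕ) : ∑ j ∈ Finset.range b, ((2 : ℝ) ^ (j + 1))⁻¹ = 1 - ((2 : ℝ) ^ b)⁻¹ := by
  induction b with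
  | zero => simp
  | succ b ih =>
      rw [Finset.sum_range_succ, ih, pow_succ]
      have : (2:ℝ) ^ b ≠ 0 := by positivity
      field_simp
      ring

lemma diff_bound (m n M j0 : ℕ) (hm : m < 2 ^ M) (hn : n < 2 ^ M) (hj0M : j0 < M)
    (hlow : ∀ j < j0, m.testBit j = n.testBit j)
    (hm0 : m.testBit j0 = true) (hn0 : n.testBit j0 = false) :
    ((2 : ℝ) ^ M)⁻¹ ≤ g2 m - g2 n ∧ g2 m - g2 n ≤ 1 - ((2 : ℝ) ^ M)⁻¹ := by
  set t : ℕ → ℝ := fun j => ((2 : ℝ) ^ (j + 1))⁻¹ with ht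
  set d : ℕ → ℝ := fun j =>
    (if m.testBit j then t j else 0) - (if n.testBit j then t j else 0) with hd
  have hdiff : g2 m - g2 n = ∑ j ∈ Finset.range M, d j := by
    rw [g2_eq m M hm, g2_eq n M hn, ← Finset.sum_sub_distrib]
  have hsplit : ∑ j ∈ Finset.range M, d j
      = ∑ j ∈ Finset.range (j0 + 1), d j + ∑ j ∈ Finset.Ico (j0 + 1) M, d j := by
    rw [Finset.range_eq_Ico, ← Finset.sum_Ico_consecutive d (Nat.zero_le _) hj0M]
    simp only [Finset.range_eq_Ico, Nat.succ_eq_add_one]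
  have hhead : ∑ j ∈ Finset.range (j0 + 1), d j = t j0 := by
    rw [Finset.sum_range_succ]
    have : ∑ j ∈ Finset.range j0, d j = 0 := by
      apply Finset.sum_eq_zero
      intro j hj
      simp only [hd, hlow j (Finset.mem_range.1 hj), sub_self]
    rw [this, zero_add]
    simp [hd, hm0, hn0]
  have htpos : ∀ j, 0 ≤ t j := fun j => by positivity
  have habs : ∀ j, |d j| ≤ t j := by
    intro j
    simp only [hd]
    rcases Bool.eq_false_or_eq_true (m.testBit j) with h1 | h1 <;>
      rcases Bool.eq_false_or_eq_true (n.testBit j) with h2 | h2 <;>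
      simp [h1, h2, abs_of_nonneg (htpos j), htpos j]
  have hIco : ∑ j ∈ Finset.Ico (j0 + 1) M, t j = t j0 - ((2 : ℝ) ^ M)⁻¹ := by
    rw [Finset.sum_Ico_eq_sub _ hj0M]
    simp only [ht]
    rw [geo, geo]
    have h2M : (2:ℝ)^M ≠ 0 := by positivity
    have h2j : (2:ℝ)^(j0+1) ≠ 0 := by positivity
    have h2j' : (2:ℝ)^j0 ≠ 0 := by positivity
    rw [pow_succ]
    field_simp
    ring
  have hS : |∑ j ∈ Finset.Ico (j0 + 1) M, d j| ≤ t j0 - ((2 : ℝ) ^ M)⁻¹ := by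
    calc |∑ j ∈ Finset.Ico (j0 + 1) M, d j| ≤ ∑ j ∈ Finset.Ico (j0 + 1) M, |d j| :=
          Finset.abs_sum_le_sum_abs _ _
      _ ≤ ∑ j ∈ Finset.Ico (j0 + 1) M, t j := Finset.sum_le_sum (fun j _ => habs j)
      _ = _ := hIco
  rw [hdiff, hsplit, hhead]
  rw [abs_le] at hS
  have ht1 : t j0 ≤ 1 / 2 := by
    simp only [ht]
    rw [div_eq_inv_mul, mul_one]
    apply inv_anti₀ (by norm_num)
    calc (2:ℝ) = 2 ^ 1 := (pow_one 2).symm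
      _ ≤ 2 ^ (j0 + 1) := by
          apply pow_le_pow_right₀ (by norm_num) (Nat.succ_le_succ (Nat.zero_le _))
  constructor
  · linarith [hS.1]
  · linarith [hS.2]

lemma gap (m n M : ℕ) (hm : m < 2 ^ M) (hn : n < 2 ^ M) (hmn : m ≠ n) :
    ((2 : ℝ) ^ M)⁻¹ ≤ |g2 m - g2 n| ∧ |g2 m - g2 n| ≤ 1 - ((2 : ℝ) ^ M)⁻¹ := by
  have hex : ∃ j, m.testBit j ≠ n.testBit j := by
    by_contra h
    push_neg at h
    exact hmn (Nat.eq_of_testBit_eq h)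
  classical
  let j0 := Nat.find hex
  have hj0 : m.testBit j0 ≠ n.testBit j0 := Nat.find_spec hex
  have hlow : ∀ j < j0, m.testBit j = n.testBit j := by
    intro j hj
    have := Nat.find_min hex hj
    simpa using this
  have hj0M : j0 < M := by
    by_contra h
    push_neg at h
    have h1 : m < 2 ^ j0 := lt_of_lt_of_le hm (Nat.pow_le_pow_right (by norm_num) h)
    have h2 : n < 2 ^ j0 := lt_of_lt_of_le hn (Nat.pow_le_pow_right (by norm_num) h)
    exact hj0 (by rw [Nat.testBit_lt_two_pow h1, Nat.testBit_lt_two_pow h2])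
  rcases Bool.eq_false_or_eq_true (m.testBit j0) with hb | hb
  · have hnb : n.testBit j0 = false := by
      rcases Bool.eq_false_or_eq_true (n.testBit j0) with h' | h'
      · exact absurd (hb.trans h'.symm) hj0
      · exact h'
    have := diff_bound m n M j0 hm hn hj0M hlow hb hnb
    have hpos : 0 ≤ g2 m - g2 n := le_trans (by positivity) this.1
    rw [abs_of_nonneg hpos]
    exact this
  · have hnb : n.testBit j0 = true := by
      rcases Bool.eq_false_or_eq_true (n.testBit j0) with h' | h'
      · exact h'
      · exact absurd (hb.trans h'.symm) hj0 
    have := diff_bound n m M j0 hn hm hj0M (fun j hj => (hlow j hj).symm) hnb hb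
    have hpos : 0 ≤ g2 n - g2 m := le_trans (by positivity) this.1
    rw [abs_sub_comm, abs_of_nonneg hpos]
    exact this

lemma nint_ge (x c : ℝ) (hc : 0 ≤ c) (h1 : c ≤ |x|) (h2 : |x| ≤ 1 - c) : c ≤ nint x := by
  rw [nint]
  set k := round x with hk
  rw [abs_le] at h2
  rcases lt_trichotomy k 0 with hk0 | hk0 | hk0
  · have hk1 : k ≤ -1 := by omega
    have : (k : ℝ) ≤ -1 := by
      calc (k:ℝ) ≤ ((-1 : ℤ) : ℝ) := by exact_mod_cast hk1
        _ = -1 := by norm_num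
    rw [le_abs]
    left
    linarith [h2.1]
  · rw [hk0]
    simpa using h1
  · have : (1 : ℝ) ≤ (k : ℝ) := by exact_mod_cast hk0
    rw [le_abs]
    right
    linarith [h2.2]

theorem stmt7 (s : ℝ) (hs0 : 0 ≤ s) (hs : s ≤ 1 / 2) (N : ℕ) (hN : 0 < N) :
    F N s = 0 := by
  have hempty : ((Finset.Icc 1 N ×ˢ Finset.Icc 1 N).filter
      (fun p => p.1 ≠ p.2 ∧ nint (vdc p.1 - vdc p.2) ≤ s / N)) = ∅ := by
    rw [Finset.filter_eq_empty_iff]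
    rintro ⟨k, l⟩ hp
    rw [Finset.mem_product, Finset.mem_Icc, Finset.mem_Icc] at hp
    rintro ⟨hne, hle⟩
    set M := Nat.clog 2 N with hM
    have hNM : N ≤ 2 ^ M := Nat.le_pow_clog (by norm_num) N
    have h2M : 2 ^ M < 2 * N := by
      rcases Nat.lt_or_ge 1 N with h1 | h1
      · have hlt := Nat.pow_pred_clog_lt_self (b := 2) (by norm_num) h1
        have hM1 : 0 < M := Nat.clog_pos (by norm_num) h1
        calc 2 ^ M = 2 * 2 ^ (M - 1) := by
              rw [← pow_succ']
              congr 1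
              omega
          _ ≤ 2 * 2 ^ (Nat.clog 2 N).pred := by rfl
          _ < 2 * N := by omega
      · have hN1 : N = 1 := by omega
        simp [hM, hN1]
    have hk1 : 1 ≤ k := hp.1.1
    have hl1 : 1 ≤ l := hp.2.1
    have hmlt : k - 1 < 2 ^ M := by omega
    have hnlt : l - 1 < 2 ^ M := by omega
    have hmn : k - 1 ≠ l - 1 := by omega
    obtain ⟨hg1, hg2⟩ := gap (k - 1) (l - 1) M hmlt hnlt hmn
    have hc : (0:ℝ) ≤ ((2:ℝ) ^ M)⁻¹ := by positivity
    have hnint := nint_ge (g2 (k-1) - g2 (l-1)) _ hc hg1 hg2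
    have hcast : (2:ℝ) ^ M < 2 * N := by
      have : ((2 ^ M : ℕ) : ℝ) < ((2 * N : ℕ) : ℝ) := by exact_mod_cast h2M
      push_cast at this
      linarith
    have hNpos : (0:ℝ) < N := by exact_mod_cast hN
    have h2Mpos : (0:ℝ) < (2:ℝ) ^ M := by positivity
    have hlt2 : s / N < ((2:ℝ) ^ M)⁻¹ := by
      have h1 : s / N ≤ (2 * (N:ℝ))⁻¹ := by
        rw [inv_eq_one_div, div_le_div_iff₀ hNpos (by positivity)]
        nlinarith
      have h2 : (2 * N : ℝ)⁻¹ < ((2:ℝ) ^ M)⁻¹ := by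
        apply inv_strictAnti₀ h2Mpos hcast
      linarith
    have : nint (vdc k - vdc l) = nint (g2 (k-1) - g2 (l-1)) := rfl
    rw [this] at hle
    linarith
  rw [F, hempty]
  simp
end

section
/- Let (x_n) be the van der Corput sequence in base 2 and F_N(s) = (1/N)·#{1 ≤ k ≠ l ≤ N : ‖x_k - x_l‖ ≤ s/N}. Then for every nonnegative integer l, every real s ∈ [l, l+1), and every M ≥ 0, F_{2^M}(s) = 2l, provided l < 2^{M-1}. -/
open scoped Classical

/-! ### Auxiliary lemmas -/

/-- bit reversal in `M` bits -/
def rev (M n : ℕ) : ℕ := ∑ j ∈ Finset.range M, (if n.testBit j then 2 ^ (M - 1 - j) else 0)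

lemma rev_lt (M n : ℕ) : rev M n < 2 ^ M := by
  have h : rev M n ≤ ∑ j ∈ Finset.range M, 2 ^ (M - 1 - j) := by
    apply Finset.sum_le_sum
    intro j hj
    split <;> simp
  have h2 : ∑ j ∈ Finset.range M, 2 ^ (M - 1 - j) = 2 ^ M - 1 := by
    have hr := Finset.sum_range_reflect (fun j => (2:ℕ) ^ j) M
    rw [hr]
    have := Nat.geomSum_eq (le_refl 2) M
    omega
  have : (1:ℕ) ≤ 2 ^ M := Nat.one_le_two_pow
  omega

lemma rev_succ (M n : ℕ) : rev (M + 1) n = (n % 2) * 2 ^ M + rev M (n / 2) := by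
  unfold rev
  rw [Finset.sum_range_succ']
  have h0 : (if n.testBit 0 then 2 ^ (M + 1 - 1 - 0) else 0) = (n % 2) * 2 ^ M := by
    rcases Nat.mod_two_eq_zero_or_one n with h | h
    · have hb : n.testBit 0 = false := by simp [h]
      simp [hb, h]
    · have hb : n.testBit 0 = true := by simp [h]
      simp [hb, h]
  rw [h0, Nat.add_comm]
  congr 1
  apply Finset.sum_congr rfl
  intro j hj
  rw [Finset.mem_range] at hj
  have ht : n.testBit (j + 1) = (n / 2).testBit j := Nat.testBit_succ n j
  rw [ht]
  congr 2
  omega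

lemma rev_inj : ∀ M a b, a < 2 ^ M → b < 2 ^ M → rev M a = rev M b → a = b := by
  intro M
  induction M with
  | zero => intro a b ha hb _; omega
  | succ M ih =>
    intro a b ha hb h
    rw [rev_succ, rev_succ] at h
    have hra := rev_lt M (a / 2)
    have hrb := rev_lt M (b / 2)
    have hm : a % 2 = b % 2 ∧ rev M (a / 2) = rev M (b / 2) := by
      rcases Nat.mod_two_eq_zero_or_one a with h1 | h1 <;>
        rcases Nat.mod_two_eq_zero_or_one b with h2 | h2 <;>
          rw [h1, h2] at h <;> simp at h <;> omega
    have := ih (a / 2) (b / 2) (by omega) (by omega) hm.2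
    omega

lemma rev_surj {M : ℕ} : ∀ c < 2 ^ M, ∃ n < 2 ^ M, rev M n = c := by
  have hs := Finset.surj_on_of_inj_on_of_card_le (s := Finset.range (2 ^ M))
    (t := Finset.range (2 ^ M)) (fun a _ => rev M a)
    (fun a _ => Finset.mem_range.mpr (rev_lt M a))
    (fun a b ha hb h => rev_inj M a b (Finset.mem_range.mp ha) (Finset.mem_range.mp hb) h)
    le_rfl
  intro c hc
  obtain ⟨a, ha, hEq⟩ := hs c (Finset.mem_range.mpr hc)
  exact ⟨a, Finset.mem_range.mp ha, hEq.symm⟩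

lemma g2_eq_s9 {M n : ℕ} (hn : n < 2 ^ M) : g2 n = (rev M n : ℝ) / 2 ^ M := by
  have key : ∀ K, n + 1 ≤ K →
      g2 n = ∑ j ∈ Finset.range K, (if n.testBit j then ((2 : ℝ) ^ (j + 1))⁻¹ else 0) := by
    intro K hK
    unfold g2
    apply Finset.sum_subset
    · exact Finset.range_subset_range.mpr hK
    · intro j hj hj2
      rw [Finset.mem_range] at hj hj2
      have : n < 2 ^ j :=
        lt_of_lt_of_le (Nat.lt_two_pow_self (n := n)) (Nat.pow_le_pow_right (by norm_num) (by omega))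
      rw [Nat.testBit_eq_false_of_lt this]
      simp
  have key2 : g2 n = ∑ j ∈ Finset.range M, (if n.testBit j then ((2 : ℝ) ^ (j + 1))⁻¹ else 0) := by
    rw [key (max (n + 1) M) (le_max_left _ _)]
    symm
    apply Finset.sum_subset
    · exact Finset.range_subset_range.mpr (le_max_right _ _)
    · intro j hj hj2
      rw [Finset.mem_range] at hj hj2
      have : n < 2 ^ j := lt_of_lt_of_le hn (Nat.pow_le_pow_right (by norm_num) (by omega))
      rw [Nat.testBit_eq_false_of_lt this]
      simp
  rw [key2]
  unfold rev
  push_cast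
  rw [Finset.sum_div]
  apply Finset.sum_congr rfl
  intro j hj
  rw [Finset.mem_range] at hj
  split
  · rw [eq_div_iff (by positivity)]
    field_simp
    rw [← pow_add]
    congr 1
    omega
  · simp

lemma nint_le (x : ℝ) (m : ℤ) : nint x ≤ |x - (m:ℝ)| := by
  unfold nint
  by_cases h : m = round x
  · rw [h]
  · have h1 : |x - round x| ≤ 1 / 2 := abs_sub_round x
    have h2 : (1:ℝ) ≤ |(m:ℝ) - (round x : ℤ)| := by
      rw [← Int.cast_sub, ← Int.cast_abs]
      have : (1:ℤ) ≤ |m - round x| := Int.one_le_abs (sub_ne_zero.mpr h)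
      exact_mod_cast this
    have h3 : |(m:ℝ) - (round x:ℤ)| ≤ |(m:ℝ) - x| + |x - (round x:ℤ)| := abs_sub_le _ _ _
    have h4 : |x - (m:ℝ)| = |(m:ℝ) - x| := abs_sub_comm _ _
    linarith

lemma nint_iff {z : ℤ} {N l : ℕ} (hN : 0 < N) (hlN : 2 * l < N) {s : ℝ}
    (h1 : (l:ℝ) ≤ s) (h2 : s < l + 1) :
    nint ((z : ℝ) / N) ≤ s / N ↔ (z % N ≤ l ∨ (N : ℤ) - l ≤ z % N) := by
  have hN' : (0:ℝ) < N := by exact_mod_cast hN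
  have hNz : (N:ℤ) ≠ 0 := by exact_mod_cast hN.ne'
  constructor
  · intro h
    set m := round ((z:ℝ)/N) with hm
    have hle : |(z:ℝ)/N - m| ≤ s / N := h
    have habs : |(z:ℝ) - m * N| ≤ s := by
      have h5 := mul_le_mul_of_nonneg_right hle (le_of_lt hN')
      rw [div_mul_cancel₀ _ (ne_of_gt hN')] at h5
      calc |(z:ℝ) - m*N| = |(z:ℝ)/N - m| * N := by
            rw [← abs_of_pos hN', ← abs_mul]
            congr 1
            rw [abs_of_pos hN', sub_mul, div_mul_cancel₀ _ (ne_of_gt hN')]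
        _ ≤ s := h5
    have hint : |z - m * (N:ℤ)| ≤ (l:ℤ) := by
      by_contra hc
      push_neg at hc
      have hc2 : ((l:ℤ) + 1 : ℝ) ≤ ((|z - m * (N:ℤ)| : ℤ) : ℝ) := by exact_mod_cast hc
      push_cast at hc2
      linarith
    set d := z - m*(N:ℤ) with hdd
    have hd : z % (N:ℤ) = d % N := by
      conv_lhs => rw [show z = d + N*m by rw [hdd]; ring]
      simp [Int.add_mul_emod_self_left]
    rw [abs_le] at hint
    rcases le_or_gt 0 d with hd0 | hd0
    · left
      rw [hd, Int.emod_eq_of_lt hd0 (by omega)]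
      omega
    · right
      have hd2 : d % (N:ℤ) = (d + N) % N := by
        conv_lhs => rw [show d = (d + N) + N*(-1) by ring]
        simp [Int.add_mul_emod_self_left]
      rw [hd, hd2, Int.emod_eq_of_lt (by omega) (by omega)]
      omega
  · intro h
    have hmod := Int.emod_nonneg z hNz
    have hmodlt := Int.emod_lt_of_pos z (by exact_mod_cast hN : (0:ℤ) < N)
    have hdm := Int.mul_ediv_add_emod z N
    have hcast : (z:ℝ) = (N:ℝ) * ((z / (N:ℤ) : ℤ):ℝ) + ((z % (N:ℤ) : ℤ):ℝ) := by
      exact_mod_cast (congrArg (fun t : ℤ => (t:ℝ)) hdm).symm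
    rcases h with h | h
    · have key := nint_le ((z:ℝ)/N) (z / (N:ℤ))
      have heq : (z:ℝ)/N - ((z / (N:ℤ) : ℤ):ℝ) = ((z % (N:ℤ) : ℤ):ℝ) / N := by
        rw [hcast]; field_simp; ring
      rw [heq, abs_of_nonneg (div_nonneg (by exact_mod_cast hmod) hN'.le)] at key
      have hzs : ((z % (N:ℤ) : ℤ):ℝ) ≤ s := le_trans (by exact_mod_cast h) h1
      exact key.trans (by gcongr)
    · have key := nint_le ((z:ℝ)/N) (z / (N:ℤ) + 1)
      have heq : (z:ℝ)/N - ((z / (N:ℤ) + 1 : ℤ):ℝ) = (((z % (N:ℤ)) - N : ℤ):ℝ) / N := by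
        push_cast
        rw [hcast]; field_simp; ring
      have habs : |(((z % (N:ℤ)) - N : ℤ):ℝ) / N| = (((N:ℤ) - z % N : ℤ):ℝ) / N := by
        rw [abs_of_nonpos]
        · push_cast; ring
        · apply div_nonpos_of_nonpos_of_nonneg _ hN'.le
          have : ((z % (N:ℤ)) - N : ℤ) ≤ 0 := by omega
          exact_mod_cast this
      rw [heq, habs] at key
      have hzs : (((N:ℤ) - z % N : ℤ):ℝ) ≤ s := by
        refine le_trans ?_ h1
        have : ((N:ℤ) - z % N) ≤ (l:ℤ) := by omega
        exact_mod_cast this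
      exact key.trans (by gcongr)

lemma card_S {N l : ℕ} (h : 2 * l < N) :
    ((Finset.range N).filter (fun c : ℕ => ¬ c = 0 ∧ ((c:ℤ) ≤ l ∨ (N:ℤ) - l ≤ c))).card = 2 * l := by
  have hset : (Finset.range N).filter (fun c : ℕ => ¬ c = 0 ∧ ((c:ℤ) ≤ l ∨ (N:ℤ) - l ≤ c))
      = Finset.Icc 1 l ∪ Finset.Icc (N - l) (N - 1) := by
    ext c
    simp only [Finset.mem_filter, Finset.mem_range, Finset.mem_union, Finset.mem_Icc]
    omega
  rw [hset, Finset.card_union_of_disjoint]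
  · rw [Nat.card_Icc, Nat.card_Icc]
    omega
  · rw [Finset.disjoint_left]
    intro c hc hc2
    rw [Finset.mem_Icc] at hc hc2
    omega

lemma mod_inv {N : ℕ} (hN : 0 < N) {a b c : ℕ} (ha : a < N) (hb : b < N) (hc : c < N) :
    (((a:ℤ) - b) % N).toNat = c ↔ b = (((a:ℤ) - c) % N).toNat := by
  have hNz : (N:ℤ) ≠ 0 := by exact_mod_cast hN.ne'
  have hN0 : (0:ℤ) < N := by exact_mod_cast hN
  have h1 := Int.emod_nonneg ((a:ℤ) - b) hNz
  have h2 := Int.emod_lt_of_pos ((a:ℤ) - b) hN0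
  have h3 := Int.emod_nonneg ((a:ℤ) - c) hNz
  have h4 := Int.emod_lt_of_pos ((a:ℤ) - c) hN0
  constructor
  · intro h
    have h' : ((a:ℤ) - b) % N = c := by omega
    have hm : ((b:ℤ)) % N = ((a:ℤ) - c) % N := by
      have : ((b:ℤ)) % N = ((a:ℤ) - (((a:ℤ) - b) % N)) % N := by
        conv_lhs => rw [show (b:ℤ) = ((a:ℤ) - ((a:ℤ)-b)) by ring]
        rw [Int.sub_emod ((a:ℤ)) (((a:ℤ)-b) % N) N, Int.emod_emod_of_dvd _ dvd_rfl,
          ← Int.sub_emod]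
      rw [this, h']
    rw [Int.emod_eq_of_lt (by omega) (by omega)] at hm
    omega
  · intro h
    have h' : (b:ℤ) = ((a:ℤ) - c) % N := by omega
    have heq2 : ((a:ℤ) - b) % N = ((a:ℤ) - ((a:ℤ) - c)) % N := by
      rw [h', Int.sub_emod ((a:ℤ)) (((a:ℤ)-c) % N) N, Int.emod_emod_of_dvd _ dvd_rfl,
        ← Int.sub_emod]
    have heq3 : ((a:ℤ) - ((a:ℤ) - c)) % N = c := by
      rw [show (a:ℤ) - ((a:ℤ) - c) = (c:ℤ) by ring, Int.emod_eq_of_lt (by omega) (by omega)]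
    omega

lemma card_prod {N : ℕ} (hN : 0 < N) (P : ℕ → Prop) [DecidablePred P] :
    ((Finset.range N ×ˢ Finset.range N).filter
        (fun p => P ((((p.1:ℤ) - p.2) % N).toNat))).card
      = ((Finset.range N).filter P).card * N := by
  have hNz : (N:ℤ) ≠ 0 := by exact_mod_cast hN.ne'
  have hN0 : (0:ℤ) < N := by exact_mod_cast hN
  have hmem : ∀ p : ℕ × ℕ, ((((p.1:ℤ) - p.2) % N).toNat) < N := by
    intro p
    have := Int.emod_nonneg ((p.1:ℤ) - p.2) hNz
    have := Int.emod_lt_of_pos ((p.1:ℤ) - p.2) hN0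
    omega
  rw [Finset.card_eq_sum_card_fiberwise
    (f := fun p : ℕ × ℕ => ((((p.1:ℤ) - p.2) % N).toNat))
    (t := (Finset.range N).filter P)]
  · rw [Finset.sum_congr rfl (g := fun _ => N), Finset.sum_const, smul_eq_mul]
    intro c hc
    rw [Finset.mem_filter, Finset.mem_range] at hc
    have heq : ((Finset.range N ×ˢ Finset.range N).filter
          (fun p => P ((((p.1:ℤ) - p.2) % N).toNat))).filter
          (fun p => (((p.1:ℤ) - p.2) % N).toNat = c)
        = (Finset.range N ×ˢ Finset.range N).filter
          (fun p => (((p.1:ℤ) - p.2) % N).toNat = c) := by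
      rw [Finset.filter_filter]
      apply Finset.filter_congr
      intro p hp
      constructor
      · exact fun h => h.2
      · exact fun h => ⟨h ▸ hc.2, h⟩
    rw [heq]
    have hcard : (Finset.range N).card = ((Finset.range N ×ˢ Finset.range N).filter
          (fun p => (((p.1:ℤ) - p.2) % N).toNat = c)).card := by
      apply Finset.card_bij' (i := fun a _ => ((a, (((a:ℤ) - c) % N).toNat) : ℕ × ℕ))
        (j := fun p _ => p.1)
      · intro a ha
        rw [Finset.mem_range] at ha
        rw [Finset.mem_filter, Finset.mem_product, Finset.mem_range, Finset.mem_range]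
        have hb : (((a:ℤ) - c) % N).toNat < N := by
          have := Int.emod_nonneg ((a:ℤ) - c) hNz
          have := Int.emod_lt_of_pos ((a:ℤ) - c) hN0
          omega
        exact ⟨⟨ha, hb⟩, ((mod_inv hN ha hb hc.1).mpr rfl)⟩
      · intro p hp
        rw [Finset.mem_filter, Finset.mem_product, Finset.mem_range, Finset.mem_range] at hp
        rw [Finset.mem_range]
        exact hp.1.1
      · intro a _; rfl
      · intro p hp
        rw [Finset.mem_filter, Finset.mem_product, Finset.mem_range, Finset.mem_range] at hp
        have := (mod_inv hN hp.1.1 hp.1.2 hc.1).mp hp.2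
        exact Prod.ext rfl this.symm
    rw [← hcard, Finset.card_range]
  · intro p hp
    rw [Finset.mem_coe, Finset.mem_filter] at hp
    rw [Finset.mem_coe, Finset.mem_filter, Finset.mem_range]
    exact ⟨hmem p, hp.2⟩

theorem stmt9 (l : ℕ) (s : ℝ) (h1 : (l : ℝ) ≤ s) (h2 : s < l + 1)
    (M : ℕ) (hM : 2 * l < 2 ^ M) :
    F (2 ^ M) s = 2 * l := by
  have hN : 0 < 2 ^ M := Nat.two_pow_pos M
  set N := 2 ^ M with hNdef
  have hNR : (0:ℝ) < N := by exact_mod_cast hN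
  have hNz : (N:ℤ) ≠ 0 := by exact_mod_cast hN.ne'
  have hN0 : (0:ℤ) < N := by exact_mod_cast hN
  -- condition equivalence on the shifted/reversed indices
  have hcond : ∀ u v : ℕ, u < N → v < N →
      (((u + 1 : ℕ) ≠ (v + 1 : ℕ) ∧ nint (vdc (u + 1) - vdc (v + 1)) ≤ s / N) ↔
        (rev M u ≠ rev M v ∧ nint (((rev M u : ℝ) - rev M v) / N) ≤ s / N)) := by
    intro u v hu hv
    have hNcast : ((N:ℕ):ℝ) = (2:ℝ) ^ M := by rw [hNdef]; push_cast; ring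
    have h1' : vdc (u + 1) = (rev M u : ℝ) / N := by
      show g2 ((u + 1) - 1) = _
      simp only [Nat.add_sub_cancel]
      rw [hNcast]
      exact g2_eq_s9 hu
    have h2' : vdc (v + 1) = (rev M v : ℝ) / N := by
      show g2 ((v + 1) - 1) = _
      simp only [Nat.add_sub_cancel]
      rw [hNcast]
      exact g2_eq_s9 hv
    rw [h1', h2', ← sub_div]
    constructor
    · rintro ⟨hne, hle⟩
      refine ⟨fun hEq => hne ?_, hle⟩
      have := rev_inj M u v hu hv hEq
      omega
    · rintro ⟨hne, hle⟩
      exact ⟨fun hEq => hne (by rw [show u = v by omega]), hle⟩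
  -- predicate equivalence on range pairs
  have hP : ∀ p : ℕ × ℕ, p.1 < N → p.2 < N →
      ((p.1 ≠ p.2 ∧ nint (((p.1:ℝ) - p.2) / N) ≤ s / N) ↔
        (fun c : ℕ => ¬ c = 0 ∧ ((c:ℤ) ≤ l ∨ (N:ℤ) - l ≤ c)) ((((p.1:ℤ) - p.2) % N).toNat)) := by
    intro p hp1 hp2
    set z : ℤ := (p.1:ℤ) - p.2 with hz
    have hmod := Int.emod_nonneg z hNz
    have hmodlt := Int.emod_lt_of_pos z hN0
    have hcz : (((z % N).toNat : ℤ)) = z % N := by omega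
    have hr : ((p.1:ℝ) - p.2) = ((z : ℤ) : ℝ) := by rw [hz]; push_cast; ring
    constructor
    · rintro ⟨hne, hle⟩
      rw [hr] at hle
      have hiff := (nint_iff hN hM h1 h2).mp hle
      constructor
      · intro h0
        have hz0 : z % N = 0 := by omega
        have hdvd : (N:ℤ) ∣ z := Int.dvd_of_emod_eq_zero hz0
        have : z = 0 := Int.eq_zero_of_abs_lt_dvd hdvd (by rw [hz]; rw [abs_lt]; constructor <;> push_cast <;> omega)
        apply hne
        have : (p.1 : ℤ) = p.2 := by omega
        exact_mod_cast this
      · omega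
    · rintro ⟨h0, hcl⟩
      have hzn0 : z % N ≠ 0 := by omega
      constructor
      · intro hEq
        apply hzn0
        rw [hz, hEq]
        simp
      · rw [hr]
        exact (nint_iff hN hM h1 h2).mpr (by omega)
  -- main cardinality computation
  have hcard : ((Finset.Icc 1 N ×ˢ Finset.Icc 1 N).filter
      (fun p => p.1 ≠ p.2 ∧ nint (vdc p.1 - vdc p.2) ≤ s / N)).card = 2 * l * N := by
    have step1 : ((Finset.Icc 1 N ×ˢ Finset.Icc 1 N).filter
        (fun p => p.1 ≠ p.2 ∧ nint (vdc p.1 - vdc p.2) ≤ s / N)).card =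
        ((Finset.range N ×ˢ Finset.range N).filter
        (fun p => p.1 ≠ p.2 ∧ nint (((p.1:ℝ) - p.2) / N) ≤ s / N)).card := by
      apply Finset.card_bij (i := fun p _ => ((rev M (p.1 - 1), rev M (p.2 - 1)) : ℕ × ℕ))
      · rintro ⟨i, j⟩ hp
        rw [Finset.mem_filter, Finset.mem_product, Finset.mem_Icc, Finset.mem_Icc] at hp
        obtain ⟨⟨⟨hi1, hi2⟩, hj1, hj2⟩, hcnd⟩ := hp
        rw [Finset.mem_filter, Finset.mem_product, Finset.mem_range, Finset.mem_range]
        refine ⟨⟨rev_lt M (i-1), rev_lt M (j-1)⟩, ?_⟩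
        have := (hcond (i-1) (j-1) (by omega) (by omega)).mp
          (by rw [show i - 1 + 1 = i by omega, show j - 1 + 1 = j by omega]; exact hcnd)
        exact this
      · rintro ⟨i, j⟩ hp ⟨i', j'⟩ hp' hEq
        rw [Finset.mem_filter, Finset.mem_product, Finset.mem_Icc, Finset.mem_Icc] at hp hp'
        rw [Prod.mk.injEq] at hEq
        have e1 := rev_inj M (i-1) (i'-1) (by omega) (by omega) hEq.1
        have e2 := rev_inj M (j-1) (j'-1) (by omega) (by omega) hEq.2
        rw [Prod.mk.injEq]
        omega
      · rintro ⟨a, b⟩ hab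
        rw [Finset.mem_filter, Finset.mem_product, Finset.mem_range, Finset.mem_range] at hab
        obtain ⟨⟨ha, hb⟩, hcnd⟩ := hab
        obtain ⟨u, hu, hru⟩ := rev_surj a ha
        obtain ⟨v, hv, hrv⟩ := rev_surj b hb
        refine ⟨(u + 1, v + 1), ?_, ?_⟩
        · rw [Finset.mem_filter, Finset.mem_product, Finset.mem_Icc, Finset.mem_Icc]
          refine ⟨⟨⟨by omega, by omega⟩, by omega, by omega⟩, ?_⟩
          exact (hcond u v hu hv).mpr (by rw [hru, hrv]; exact hcnd)
        · simp only [Nat.add_sub_cancel]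
          rw [hru, hrv]
    rw [step1]
    have step2 : ((Finset.range N ×ˢ Finset.range N).filter
        (fun p => p.1 ≠ p.2 ∧ nint (((p.1:ℝ) - p.2) / N) ≤ s / N))
        = ((Finset.range N ×ˢ Finset.range N).filter
        (fun p => (fun c : ℕ => ¬ c = 0 ∧ ((c:ℤ) ≤ l ∨ (N:ℤ) - l ≤ c))
          ((((p.1:ℤ) - p.2) % N).toNat))) := by
      apply Finset.filter_congr
      intro p hp
      rw [Finset.mem_product, Finset.mem_range, Finset.mem_range] at hp
      exact hP p hp.1 hp.2
    rw [step2]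
    have h3 := card_prod hN (fun c : ℕ => ¬ c = 0 ∧ ((c:ℤ) ≤ l ∨ (N:ℤ) - l ≤ c))
    have h4 := card_S (l := l) (N := N) hM
    exact h3.trans (congrArg (fun k => k * N) h4)
  show (((Finset.Icc 1 N ×ˢ Finset.Icc 1 N).filter
      (fun p => p.1 ≠ p.2 ∧ nint (vdc p.1 - vdc p.2) ≤ s / N)).card : ℝ) / N = 2 * l
  rw [hcard]
  push_cast
  field_simp
end

section
/- For any two distinct elements x_i, x_j (1 ≤ i ≠ j ≤ 2^M) among the first 2^M terms of the van der Corput sequence in base 2, the distance to the nearest integer satisfies ‖x_i - x_j‖ ≥ 2^{-M}. -/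
open scoped Classical

lemma g2_eq_sum (n K : ℕ) (h : n + 1 ≤ K) :
    g2 n = ∑ j ∈ Finset.range K, (if n.testBit j then ((2 : ℝ) ^ (j + 1))⁻¹ else 0) := by
  unfold g2
  refine Finset.sum_subset (Finset.range_subset_range.2 h) ?_
  intro j hj hjn
  simp only [Finset.mem_range, not_lt] at hjn
  have : n < 2 ^ j := lt_of_lt_of_le (Nat.lt_two_pow_self (n := n)) (Nat.pow_le_pow_right (by norm_num) (by omega))
  rw [Nat.testBit_lt_two_pow this]
  simp

lemma g2_rec (n : ℕ) :
    g2 n = (if n.testBit 0 then (2 : ℝ)⁻¹ else 0) + g2 (n / 2) / 2 := by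
  rw [g2_eq_sum n (n + 2) (by omega), g2_eq_sum (n / 2) (n + 1) (by omega)]
  rw [Finset.sum_range_succ']
  rw [add_comm]
  congr 1
  · norm_num
  · rw [Finset.sum_div]
    refine Finset.sum_congr rfl fun j _ => ?_
    rw [Nat.testBit_add_one]
    by_cases h : (n / 2).testBit j <;> simp [h, pow_succ]
    ring

lemma g2_nonneg (n : ℕ) : 0 ≤ g2 n := by
  unfold g2
  refine Finset.sum_nonneg fun j _ => ?_
  positivity

lemma g2_lt_one (n : ℕ) : g2 n < 1 := by
  unfold g2
  calc ∑ j ∈ Finset.range (n + 1), (if n.testBit j then ((2 : ℝ) ^ (j + 1))⁻¹ else 0)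
      ≤ ∑ j ∈ Finset.range (n + 1), ((2 : ℝ) ^ (j + 1))⁻¹ := by
        refine Finset.sum_le_sum fun j _ => ?_
        split
        · exact le_rfl
        · positivity
    _ < 1 := by
        have : ∀ K : ℕ, ∑ j ∈ Finset.range K, ((2 : ℝ) ^ (j + 1))⁻¹ = 1 - (2 : ℝ)⁻¹ ^ K := by
          intro K
          induction K with
          | zero => simp
          | succ K ih =>
            rw [Finset.sum_range_succ, ih]
            rw [pow_succ, pow_succ]
            simp only [inv_pow]
            field_simp
            ring
        rw [this]
        have : (0:ℝ) < (2 : ℝ)⁻¹ ^ (n + 1) := by positivity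
        linarith

lemma g2_eq_zero : ∀ n : ℕ, g2 n = 0 → n = 0 := by
  intro n
  induction n using Nat.strong_induction_on with
  | _ n IH =>
    intro h
    rcases Nat.eq_zero_or_pos n with hn | hn
    · exact hn
    · have h1 := g2_rec n
      have hx0 := g2_nonneg (n / 2)
      have hbit : n.testBit 0 = false := by
        by_contra hb
        rw [Bool.not_eq_false] at hb
        rw [h1, hb] at h
        simp at h
        linarith
      rw [h1, hbit] at h
      simp at h
      have hhalf : g2 (n / 2) = 0 := by linarith
      have := IH (n / 2) (Nat.div_lt_self hn one_lt_two) hhalf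
      have hm : n % 2 = 0 := by
        have := hbit
        rw [Nat.testBit_zero] at this
        simp at this
        omega
      omega

lemma g2_inj : ∀ m n : ℕ, g2 m = g2 n → m = n := by
  intro m
  induction m using Nat.strong_induction_on with
  | _ m IH =>
    intro n h
    rcases Nat.eq_zero_or_pos m with hm | hm
    · subst hm
      -- g2 0 = 0; show n = 0
      have h0 : g2 0 = 0 := by simp [g2]
      exact (g2_eq_zero n (by rw [← h, h0])).symm
    · have h1 := g2_rec m
      have h2 := g2_rec n
      have hx0 := g2_nonneg (m / 2)
      have hx1 := g2_lt_one (m / 2)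
      have hy0 := g2_nonneg (n / 2)
      have hy1 := g2_lt_one (n / 2)
      have hb : m.testBit 0 = n.testBit 0 := by
        by_contra hb
        rcases Bool.eq_false_or_eq_true (m.testBit 0) with h3 | h3 <;>
          rcases Bool.eq_false_or_eq_true (n.testBit 0) with h4 | h4 <;>
            simp [h3, h4] at hb h1 h2 ⊢ <;> rw [h1, h2] at h <;> linarith
      have hg : g2 (m / 2) = g2 (n / 2) := by
        rw [h1, h2, hb] at h
        have := add_left_cancel h
        linarith
      have hdiv : m / 2 = n / 2 := IH (m / 2) (Nat.div_lt_self hm one_lt_two) _ hg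
      have hmod : m % 2 = n % 2 := by
        have := hb
        rw [Nat.testBit_zero, Nat.testBit_zero] at this
        simp only [decide_eq_decide] at this
        omega
      omega

lemma g2_exists_int : ∀ M n : ℕ, n < 2 ^ M → ∃ k : ℕ, k < 2 ^ M ∧ g2 n = (k : ℝ) / 2 ^ M := by
  intro M
  induction M with
  | zero =>
    intro n hn
    interval_cases n
    exact ⟨0, by norm_num, by simp [g2]⟩
  | succ M ih =>
    intro n hn
    obtain ⟨k, hk, hgk⟩ := ih (n / 2) (by omega)
    refine ⟨(if n.testBit 0 then 2 ^ M else 0) + k, by split <;> [omega; (simp; omega)], ?_⟩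
    rw [g2_rec n, hgk]
    have h2 : (2 : ℝ) ^ M ≠ 0 := by positivity
    split <;> push_cast <;> rw [pow_succ] <;> field_simp <;> ring

theorem stmt11 (M i j : ℕ) (hi1 : 1 ≤ i) (hi2 : i ≤ 2 ^ M)
    (hj1 : 1 ≤ j) (hj2 : j ≤ 2 ^ M) (hij : i ≠ j) :
    ((2 : ℝ) ^ M)⁻¹ ≤ nint (vdc i - vdc j) := by
  obtain ⟨a, ha, hga⟩ := g2_exists_int M (i - 1) (by omega)
  obtain ⟨b, hb, hgb⟩ := g2_exists_int M (j - 1) (by omega)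
  have hab : a ≠ b := by
    intro h
    apply hij
    have := g2_inj (i - 1) (j - 1) (by rw [hga, hgb, h])
    omega
  have h2 : (0:ℝ) < 2 ^ M := by positivity
  set d : ℝ := vdc i - vdc j with hd
  set r : ℤ := round d with hr
  set z : ℤ := (a : ℤ) - b - r * 2 ^ M with hz
  have hdz : d - r = (z : ℝ) / 2 ^ M := by
    have hdd : d = ((a : ℝ) - b) / 2 ^ M := by
      rw [hd]; unfold vdc; rw [hga, hgb]; ring
    rw [hdd, hz]
    push_cast
    field_simp
  have hzne : z ≠ 0 := by
    intro h0
    have h1 : (a : ℤ) - b = r * 2 ^ M := by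
      have := hz ▸ h0
      linarith
    have h2M : (0:ℤ) < 2 ^ M := by positivity
    have haZ : (a : ℤ) < 2 ^ M := by exact_mod_cast ha
    have hbZ : (b : ℤ) < 2 ^ M := by exact_mod_cast hb
    have ha0 : (0:ℤ) ≤ (a : ℤ) := Int.natCast_nonneg a
    have hb0 : (0:ℤ) ≤ (b : ℤ) := Int.natCast_nonneg b
    have habs : |(a : ℤ) - b| < 2 ^ M := by
      rw [abs_lt]; constructor <;> linarith
    have hlt : |r| * 2 ^ M < 2 ^ M := by
      calc |r| * 2 ^ M = |r * 2 ^ M| := by rw [abs_mul, abs_of_pos h2M]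
      _ = |(a : ℤ) - b| := by rw [← h1]
      _ < 2 ^ M := habs
    have hr0 : |r| < 1 := by nlinarith [abs_nonneg r]
    have hr00 : r = 0 := by
      rw [abs_lt] at hr0
      omega
    have hab2 : (a : ℤ) = b := by
      rw [hr00] at h1
      linarith
    exact hab (by exact_mod_cast hab2)
  have h1z : (1 : ℝ) ≤ |(z : ℝ)| := by
    exact_mod_cast Int.one_le_abs hzne
  unfold nint
  have : |d - (round d : ℝ)| = |(z : ℝ)| / 2 ^ M := by
    rw [← hr, hdz, abs_div, abs_of_pos h2]
  rw [this, inv_eq_one_div]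
  gcongr
end
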